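/- Let α be a type, X ⊆ α a set, ι a finite index set, n : ι → α → ℂ and d : ι → α → ℝ functions such that d i x > 0 for every i ∈ ι and every x ∈ X. Define F(x) = ∑_{i ∈ ι} |n i x|² / (d i x) and F_q(x, y) = ∑_{i ∈ ι} (2·Re(conj(y i)·(n i x)) − |y i|²·(d i x)) for y : ι → ℂ. Then: (i) for every x ∈ X and every y : ι → ℂ, F_q(x, y) ≤ F(x); and (ii) for every x ∈ X, F_q(x, ŷ) = F(x) where ŷ i = (n i x)/(d i x). -/

import Mathlib

open scoped BigOperators

lemma quad_term_le (a y : ℂ) (t : ℝ) (ht : 0 < t) :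
    2 * ((starRingEnd ℂ) y * a).re - ‖y‖ ^ 2 * t ≤ ‖a‖ ^ 2 / t := by
  rw [le_div_iff₀ ht]
  have h : ‖a‖ ^ 2 - (2 * ((starRingEnd ℂ) y * a).re - ‖y‖ ^ 2 * t) * t
      = ‖a - (t : ℂ) * y‖ ^ 2 := by
    simp only [Complex.sq_norm, Complex.normSq_apply, Complex.sub_re, Complex.sub_im,
      Complex.mul_re, Complex.mul_im, Complex.ofReal_re, Complex.ofReal_im,
      Complex.conj_re, Complex.conj_im]
    ring
  nlinarith [sq_nonneg (‖a - (t : ℂ) * y‖), h]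

lemma quad_term_eq (a : ℂ) (t : ℝ) (ht : 0 < t) :
    2 * ((starRingEnd ℂ) (a / (t : ℂ)) * a).re - ‖a / (t : ℂ)‖ ^ 2 * t
      = ‖a‖ ^ 2 / t := by
  have ht' : (t : ℂ) ≠ 0 := by exact_mod_cast ht.ne'
  have habs : ‖a / (t : ℂ)‖ = ‖a‖ / t := by
    rw [norm_div, Complex.norm_of_nonneg ht.le]
  have hre : ((starRingEnd ℂ) (a / (t : ℂ)) * a).re = ‖a‖ ^ 2 / t := by
    have : (starRingEnd ℂ) (a / (t : ℂ)) * a = ((‖a‖ ^ 2 / t : ℝ) : ℂ) := by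
      rw [map_div₀]
      rw [div_mul_eq_mul_div, ← Complex.normSq_eq_conj_mul_self, Complex.conj_ofReal]
      push_cast [Complex.sq_norm]
      ring
    rw [this, Complex.ofReal_re]
  rw [hre, habs, div_pow]
  field_simp
  ring

theorem quadratic_transform_bound {α : Type*} {ι : Type*} [Fintype ι]
    (X : Set α) (n : ι → α → ℂ) (d : ι → α → ℝ)
    (hd : ∀ i, ∀ x ∈ X, 0 < d i x) :
    (∀ x ∈ X, ∀ y : ι → ℂ,
        (∑ i, (2 * ((starRingEnd ℂ) (y i) * n i x).re - ‖y i‖ ^ 2 * d i x)) ≤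
          ∑ i, ‖n i x‖ ^ 2 / d i x) ∧
      (∀ x ∈ X,
        (∑ i, (2 * ((starRingEnd ℂ) (n i x / (d i x : ℂ)) * n i x).re -
            ‖n i x / (d i x : ℂ)‖ ^ 2 * d i x)) =
          ∑ i, ‖n i x‖ ^ 2 / d i x) := by
  constructor
  · intro x hx y
    exact Finset.sum_le_sum fun i _ => quad_term_le (n i x) (y i) (d i x) (hd i x hx)
  · intro x hx
    exact Finset.sum_congr rfl fun i _ => quad_term_eq (n i x) (d i x) (hd i x hx)
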